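/- If σ is a satisfying assignment of the goal-restricted theory T_G(S,F), then the extracted abstract action set A_σ is sound relative to S and complete relative to the set of marked (goal-relevant) transitions of S. -/
import Mathlib


inductive Change
  | inc | dec | same
deriving DecidableEq

def delta (v v' : ℕ) : Change := if v < v' then .inc else if v' < v then .dec else .same

/-- Qualitative (boolean) value of feature `f` at state `s`: whether its value is 0. -/
def qv {State F : Type} (val : F → State → ℕ) (f : F) (s : State) : Bool :=
  decide (val f s = 0)

def Expanded {State : Type} (S : Set (State × State)) (s : State) : Prop := ∃ s', (s, s') ∈ S

structure Act (F : Type) where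
  pre : F → Option Bool
  eff : F → Option Change

/-- The abstract action `a` is defined only over the features in `sel`. -/
def Over {F : Type} (sel : F → Prop) (a : Act F) : Prop :=
  ∀ f, ¬ sel f → a.pre f = none ∧ a.eff f = none

/-- `a` is applicable in the abstract state of `s`. -/
def App {State F : Type} (val : F → State → ℕ) (a : Act F) (s : State) : Prop :=
  ∀ (f : F) (b : Bool), a.pre f = some b → qv val f s = b

/-- `a` is applicable at `s` and has the same qualitative effects over the selected
features as the transition (s,s'). -/
def Matches {State F : Type} (val : F → State → ℕ) (sel : F → Prop) (a : Act F)
    (s s' : State) : Prop :=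
  App val a s ∧ ∀ f, sel f → (a.eff f).getD .same = delta (val f s) (val f s')

def SoundRel {State F : Type} (val : F → State → ℕ) (S : Set (State × State))
    (sel : F → Prop) (A : Set (Act F)) : Prop :=
  ∀ a ∈ A, ∀ s, Expanded S s → App val a s → ∃ s', (s, s') ∈ S ∧ Matches val sel a s s'

def CompleteRel {State F : Type} (val : F → State → ℕ) (S : Set (State × State))
    (sel : F → Prop) (A : Set (Act F)) : Prop :=
  ∀ p ∈ S, ∃ a ∈ A, Matches val sel a p.1 p.2

/-- Satisfaction of the theory T(S,F) by an assignment (sel, d1, d2):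
clause families (1)-(4). -/
def SatT {State F : Type} (S : Set (State × State)) (goal : State → Prop)
    (val : F → State → ℕ) (sel : F → Prop) (d1 : State → State → Prop)
    (d2 : State → State → State → State → Prop) : Prop :=
  (∀ s t, Expanded S s → Expanded S t →
      (d1 s t ↔ ∃ f, sel f ∧ qv val f s ≠ qv val f t)) ∧
  (∀ s s' t t', (s, s') ∈ S → (t, t') ∈ S →
      (d2 s s' t t' ↔ ∃ f, sel f ∧ qv val f s = qv val f t ∧
          delta (val f s) (val f s') ≠ delta (val f t) (val f t'))) ∧
  (∀ s s' t, (s, s') ∈ S → Expanded S t → ¬ d1 s t →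
      ∃ t', (t, t') ∈ S ∧ ¬ d2 s s' t t') ∧
  (∀ s t, Expanded S s → Expanded S t → (goal s ↔ ¬ goal t) → d1 s t)

open scoped Classical in
/-- The abstract action extracted from transition (s,s') over the selected features. -/
noncomputable def extract {State F : Type} (val : F → State → ℕ) (sel : F → Prop)
    (s s' : State) : Act F :=
  { pre := fun f => if sel f then some (qv val f s) else none,
    eff := fun f => if sel f then some (delta (val f s) (val f s')) else none }

/-- Satisfaction of the goal-restricted theory T_G(S,F): clauses (1)-(3) range over
the marked transitions M and their source states, while t and (t,t') range over S. -/
def SatTG {State F : Type} (S M : Set (State × State)) (goal : State → Prop)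
    (val : F → State → ℕ) (sel : F → Prop) (d1 : State → State → Prop)
    (d2 : State → State → State → State → Prop) : Prop :=
  (∀ s t, Expanded M s → Expanded S t →
      (d1 s t ↔ ∃ f, sel f ∧ qv val f s ≠ qv val f t)) ∧
  (∀ s s' t t', (s, s') ∈ M → (t, t') ∈ S →
      (d2 s s' t t' ↔ ∃ f, sel f ∧ qv val f s = qv val f t ∧
          delta (val f s) (val f s') ≠ delta (val f t) (val f t'))) ∧
  (∀ s s' t, (s, s') ∈ M → Expanded S t → ¬ d1 s t →
      ∃ t', (t, t') ∈ S ∧ ¬ d2 s s' t t') ∧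
  (∀ s t, Expanded S s → Expanded S t → (goal s ↔ ¬ goal t) → d1 s t)

/-- From a satisfying assignment of T_G(S,F), the abstract actions
extracted from the marked transitions are sound relative to S and complete relative
to the marked transitions M. -/
theorem stmt8 {State F : Type} (S M : Set (State × State)) (hM : M ⊆ S)
    (goal : State → Prop) (val : F → State → ℕ) (sel : F → Prop)
    (d1 : State → State → Prop) (d2 : State → State → State → State → Prop)
    (h : SatTG S M goal val sel d1 d2) :
    SoundRel val S sel {a | ∃ p ∈ M, a = extract val sel p.1 p.2} ∧
    (∀ p ∈ M, ∃ a ∈ {a | ∃ q ∈ M, a = extract val sel q.1 q.2},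
      Matches val sel a p.1 p.2) := by
  obtain ⟨h1, h2, h3, h4⟩ := h
  constructor
  · rintro a ⟨⟨s, s'⟩, hss, rfl⟩ t ht happ
    have hEMs : Expanded M s := ⟨s', hss⟩
    have hqv : ∀ f, sel f → qv val f s = qv val f t := by
      intro f hf
      exact (happ f _ (by simp [extract, hf])).symm
    have hnd1 : ¬ d1 s t := by
      rw [h1 s t hEMs ht]
      rintro ⟨f, hf, hne⟩
      exact hne (hqv f hf)
    obtain ⟨t', htt', hnd2⟩ := h3 s s' t hss ht hnd1
    refine ⟨t', htt', happ, fun f hf => ?_⟩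
    have : delta (val f s) (val f s') = delta (val f t) (val f t') := by
      by_contra hne
      exact hnd2 ((h2 s s' t t' hss htt').mpr ⟨f, hf, hqv f hf, hne⟩)
    simp [extract, hf, this]
  · rintro ⟨s, s'⟩ hss
    refine ⟨extract val sel s s', ⟨(s, s'), hss, rfl⟩, ?_, fun f hf => ?_⟩
    · intro f b hb
      simp only [extract] at hb
      split at hb
      · exact Option.some_inj.mp hb
      · exact absurd hb (by simp)
    · simp [extract, hf]
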